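/- Let μ > 0, 0 < ν < 1 and 0 < p < 1 be real numbers, and set y_m := ⌊μ/(1−p)^(1/ν)⌋. Then the supremum over natural numbers y of (μ^y/y!)^ν / (p(1−p)^y) equals (1/p) · μ^(ν·y_m) / ((1−p)^(y_m) · (y_m!)^ν), and the supremum is attained at y = y_m. -/

import Mathlib

/-- For `μ > 0`, `0 < ν < 1`, `0 < p < 1` and `y_m := ⌊μ/(1−p)^(1/ν)⌋`,
the supremum over naturals `y` of `(μ^y/y!)^ν / (p(1−p)^y)` equals
`(1/p) · μ^(ν·y_m) / ((1−p)^(y_m) · (y_m!)^ν)`, attained at `y = y_m`. -/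
theorem stmt_7 (μ ν p : ℝ) (hμ : 0 < μ) (hν0 : 0 < ν) (hν1 : ν < 1)
    (hp0 : 0 < p) (hp1 : p < 1)
    (ym : ℕ) (hym : ym = ⌊μ / (1 - p) ^ (1 / ν)⌋₊) :
    IsGreatest
      (Set.range fun y : ℕ => (μ ^ y / (Nat.factorial y : ℝ)) ^ ν / (p * (1 - p) ^ y))
      ((1 / p) * (μ ^ (ν * (ym : ℝ)) / ((1 - p) ^ ym * (Nat.factorial ym : ℝ) ^ ν))) ∧
    (μ ^ ym / (Nat.factorial ym : ℝ)) ^ ν / (p * (1 - p) ^ ym) =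
      (1 / p) * (μ ^ (ν * (ym : ℝ)) / ((1 - p) ^ ym * (Nat.factorial ym : ℝ) ^ ν)) := by
  have hq : (0:ℝ) < 1 - p := by linarith
  set f : ℕ → ℝ := fun y => (μ ^ y / (Nat.factorial y : ℝ)) ^ ν / (p * (1 - p) ^ y) with hf
  have hfpos : ∀ y, 0 < f y := by
    intro y
    have h1 : (0:ℝ) < μ ^ y / (Nat.factorial y : ℝ) := by positivity
    have := Real.rpow_pos_of_pos h1 ν
    positivity
  -- equality claim
  have heq : ∀ k : ℕ, f k =
      (1 / p) * (μ ^ (ν * (k : ℝ)) / ((1 - p) ^ k * (Nat.factorial k : ℝ) ^ ν)) := by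
    intro k
    have hfk : (0:ℝ) < (Nat.factorial k : ℝ) := by
      exact_mod_cast Nat.factorial_pos k
    have h1 : (μ ^ k / (Nat.factorial k : ℝ)) ^ ν
        = (μ ^ k) ^ ν / (Nat.factorial k : ℝ) ^ ν :=
      Real.div_rpow (by positivity) hfk.le ν
    have h2 : (μ ^ k : ℝ) ^ ν = μ ^ (ν * (k : ℝ)) := by
      rw [← Real.rpow_natCast μ k, ← Real.rpow_mul hμ.le, mul_comm]
    have hfk' : (0:ℝ) < (Nat.factorial k : ℝ) ^ ν := Real.rpow_pos_of_pos hfk ν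
    have hqk : (0:ℝ) < (1 - p) ^ k := by positivity
    rw [hf]
    simp only
    rw [h1, h2]
    ring
  refine ⟨⟨⟨ym, (heq ym).symm ▸ rfl⟩, ?_⟩, heq ym⟩
  -- upper bound
  rintro x ⟨y, rfl⟩
  rw [← heq ym]
  show f y ≤ f ym
  -- ratio identity
  have hratio : ∀ y : ℕ, f (y + 1) = f y * ((μ / ((y : ℝ) + 1)) ^ ν / (1 - p)) := by
    intro y
    have hy1 : (0:ℝ) < (y : ℝ) + 1 := by positivity
    have hfk : (0:ℝ) < (Nat.factorial y : ℝ) := by exact_mod_cast Nat.factorial_pos y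
    have h1 : μ ^ (y + 1) / (Nat.factorial (y + 1) : ℝ)
        = (μ ^ y / (Nat.factorial y : ℝ)) * (μ / ((y : ℝ) + 1)) := by
      rw [Nat.factorial_succ]
      push_cast
      field_simp
      ring
    have h2 : ((μ ^ y / (Nat.factorial y : ℝ)) * (μ / ((y : ℝ) + 1))) ^ ν
        = (μ ^ y / (Nat.factorial y : ℝ)) ^ ν * (μ / ((y : ℝ) + 1)) ^ ν :=
      Real.mul_rpow (by positivity) (by positivity)
    have hbpos : (0:ℝ) < (μ ^ y / (Nat.factorial y : ℝ)) ^ ν :=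
      Real.rpow_pos_of_pos (by positivity) ν
    have hqk : (0:ℝ) < (1 - p) ^ y := by positivity
    rw [hf]
    simp only
    rw [h1, h2, pow_succ]
    field_simp
  have hc : (0:ℝ) < (1 - p) ^ (1 / ν) := Real.rpow_pos_of_pos hq _
  have hx0 : (0:ℝ) ≤ μ / (1 - p) ^ (1 / ν) := by positivity
  have hrw : ((1 - p) ^ (1 / ν)) ^ ν = 1 - p := by
    rw [one_div, Real.rpow_inv_rpow hq.le hν0.ne']
  -- increasing up to ym
  have hup : ∀ d y : ℕ, y + d = ym → f y ≤ f ym := by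
    intro d
    induction d with
    | zero => intro y h; simp only [Nat.add_zero] at h; rw [h]
    | succ n ih =>
      intro y h
      refine le_trans ?_ (ih (y + 1) (by omega))
      rw [hratio y]
      have hle : ((y : ℝ) + 1) ≤ μ / (1 - p) ^ (1 / ν) := by
        have : y + 1 ≤ ⌊μ / (1 - p) ^ (1 / ν)⌋₊ := by omega
        have := (Nat.le_floor_iff hx0).mp this
        push_cast at this
        linarith
      have hy1 : (0:ℝ) < (y : ℝ) + 1 := by positivity
      have h1 : 1 - p ≤ (μ / ((y : ℝ) + 1)) ^ ν := by
        rw [← hrw]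
        refine Real.rpow_le_rpow hc.le ?_ hν0.le
        rw [le_div_iff₀ hy1]
        calc (1 - p) ^ (1 / ν) * ((y:ℝ) + 1)
            ≤ (1 - p) ^ (1 / ν) * (μ / (1 - p) ^ (1 / ν)) := by
              exact mul_le_mul_of_nonneg_left hle hc.le
          _ = μ := by field_simp
      have : (1:ℝ) ≤ (μ / ((y : ℝ) + 1)) ^ ν / (1 - p) := (one_le_div hq).mpr h1
      exact le_mul_of_one_le_right (hfpos y).le this
  -- decreasing after ym
  have hdown : ∀ y : ℕ, ym ≤ y → f y ≤ f ym := by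
    intro y hy
    induction y, hy using Nat.le_induction with
    | base => exact le_rfl
    | succ n hn ih =>
      refine le_trans ?_ ih
      rw [hratio n]
      have hlt : μ / (1 - p) ^ (1 / ν) < (n : ℝ) + 1 := by
        have h1 : μ / (1 - p) ^ (1 / ν) < ym + 1 := by
          rw [hym]; exact Nat.lt_floor_add_one _
        have h2 : (ym : ℝ) + 1 ≤ (n : ℝ) + 1 := by
          have : (ym:ℝ) ≤ n := by exact_mod_cast hn
          linarith
        linarith
      have hy1 : (0:ℝ) < (n : ℝ) + 1 := by positivity
      have h1 : (μ / ((n : ℝ) + 1)) ^ ν ≤ 1 - p := by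
        rw [← hrw]
        refine Real.rpow_le_rpow (by positivity) ?_ hν0.le
        rw [div_le_iff₀ hy1]
        calc μ = (1 - p) ^ (1 / ν) * (μ / (1 - p) ^ (1 / ν)) := by field_simp
          _ ≤ (1 - p) ^ (1 / ν) * ((n:ℝ) + 1) :=
              mul_le_mul_of_nonneg_left hlt.le hc.le
      have : (μ / ((n : ℝ) + 1)) ^ ν / (1 - p) ≤ 1 := by
        rw [div_le_one hq]; exact h1
      exact mul_le_of_le_one_right (hfpos n).le this
  rcases le_or_gt y ym with hle | hlt
  · exact hup (ym - y) y (by omega)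
  · exact hdown y hlt.le
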